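/- arXiv:2001.10745 — 4 statements merged into one kernel-verified Lean document; each statement's English description precedes it below -/
import Mathlib

section
/- Let f̃, g̃ be torus functions with absolutely summable Fourier coefficients and let k ∈ ℝ^d. Then P₀[f̃·g̃ − (H f̃)·(H g̃)] = Σ_{j∈ℤ^d, ⟨j,k⟩=0} f̂_j ĝ_{−j}, where the sum is over all lattice points j with ⟨j,k⟩ = 0. -/
open MeasureTheory

noncomputable section Stmt4Aux

namespace Stmt4Aux

variable {d : ℕ}

/-- exponential character -/
def E (d : ℕ) (j : Fin d → ℤ) (α : Fin d → ℝ) : ℂ :=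
  Complex.exp (Complex.I * ((∑ i, (j i : ℝ) * α i : ℝ) : ℂ))

lemma norm_E (j : Fin d → ℤ) (α : Fin d → ℝ) : ‖E d j α‖ = 1 := by
  unfold E; rw [mul_comm]; exact Complex.norm_exp_ofReal_mul_I _

lemma continuous_E (j : Fin d → ℤ) : Continuous (E d j) := by
  unfold E; fun_prop

lemma E_mul (j l : Fin d → ℤ) (α : Fin d → ℝ) :
    E d j α * E d l α = E d (j + l) α := by
  unfold E
  rw [← Complex.exp_add]
  congr 1
  push_cast
  rw [Finset.mul_sum, Finset.mul_sum, Finset.mul_sum, ← Finset.sum_add_distrib]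
  exact Finset.sum_congr rfl fun i _ => by simp only [Pi.add_apply]; push_cast; ring

lemma int_one (m : ℤ) :
    ∫ x in Set.Icc (0:ℝ) (2*Real.pi), Complex.exp (Complex.I * (((m:ℝ) * x : ℝ) : ℂ)) =
      if m = 0 then ((2*Real.pi : ℝ) : ℂ) else 0 := by
  have h2π : (0:ℝ) ≤ 2*Real.pi := by positivity
  rw [MeasureTheory.integral_Icc_eq_integral_Ioc, ← intervalIntegral.integral_of_le h2π]
  by_cases hm : m = 0
  · subst hm; simp
  · rw [if_neg hm]
    have hc : (Complex.I * m : ℂ) ≠ 0 := by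
      simp [Complex.I_ne_zero, Complex.ext_iff, hm]
    have heq : ∀ x : ℝ, Complex.I * (((m:ℝ) * x : ℝ) : ℂ) = (Complex.I * m) * x := by
      intro x; push_cast; ring
    simp_rw [heq]
    rw [integral_exp_mul_complex hc]
    have h1 : Complex.exp (Complex.I * m * (2*Real.pi : ℝ)) = 1 := by
      rw [← Complex.exp_int_mul_two_pi_mul_I m]
      congr 1; push_cast; ring
    rw [h1]
    simp

lemma setIntegral_pi_prod (s : Fin d → Set ℝ) (hs : ∀ i, MeasurableSet (s i))
    (f : Fin d → ℝ → ℂ) :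
    ∫ α in Set.pi Set.univ s, ∏ i, f i (α i) = ∏ i, ∫ x in s i, f i x := by
  rw [← integral_indicator (MeasurableSet.univ_pi hs)]
  have key : ∀ α : Fin d → ℝ,
      (Set.pi Set.univ s).indicator (fun α => ∏ i, f i (α i)) α
        = ∏ i, (s i).indicator (f i) (α i) := by
    intro α
    by_cases h : α ∈ Set.pi Set.univ s
    · rw [Set.indicator_of_mem h]
      exact Finset.prod_congr rfl fun i _ =>
        (Set.indicator_of_mem (h i (Set.mem_univ i)) _).symm
    · rw [Set.indicator_of_notMem h]
      have : ∃ i, α i ∉ s i := by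
        by_contra hcon; push_neg at hcon
        exact h fun i _ => hcon i
      obtain ⟨i, hi⟩ := this
      exact (Finset.prod_eq_zero (Finset.mem_univ i)
        (Set.indicator_of_notMem hi _)).symm
  simp_rw [key]
  rw [MeasureTheory.volume_pi, MeasureTheory.integral_fintype_prod_eq_prod (fun i => (s i).indicator (f i))]
  exact Finset.prod_congr rfl fun i _ => integral_indicator (hs i)

lemma integral_E (j : Fin d → ℤ) :
    ∫ α in Set.pi Set.univ (fun _ : Fin d => Set.Icc (0:ℝ) (2*Real.pi)), E d j α
      = if j = 0 then (((2*Real.pi)^d : ℝ) : ℂ) else 0 := by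
  have key : ∀ α : Fin d → ℝ,
      E d j α = ∏ i, Complex.exp (Complex.I * (((j i : ℝ) * α i : ℝ) : ℂ)) := by
    intro α
    unfold E
    rw [← Complex.exp_sum]
    congr 1
    push_cast
    rw [Finset.mul_sum]
  simp_rw [key]
  rw [setIntegral_pi_prod (fun _ => Set.Icc (0:ℝ) (2*Real.pi)) (fun _ => measurableSet_Icc)
    (fun i x => Complex.exp (Complex.I * (((j i : ℝ) * x : ℝ) : ℂ)))]
  simp_rw [int_one]
  by_cases hj : j = 0
  · subst hj
    simp [Finset.prod_const]
  · rw [if_neg hj]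
    have : ∃ i, j i ≠ 0 := by
      by_contra h; push_neg at h; exact hj (funext h)
    obtain ⟨i, hi⟩ := this
    exact Finset.prod_eq_zero (Finset.mem_univ i) (by rw [if_neg hi])

end Stmt4Aux

set_option maxHeartbeats 1000000 in
open Stmt4Aux in
/-- For torus functions `f, g` with absolutely summable Fourier coefficients
and `k ∈ ℝ^d`, the mean value of `f·g − (Hf)·(Hg)` equals
`Σ_{⟨j,k⟩=0} f̂_j ĝ_{−j}`, where `H` is the Fourier multiplier with
symbol `−i·sgn(⟨j,k⟩)`. -/
theorem stmt4 (d : ℕ) (k : Fin d → ℝ)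
    (fhat ghat : (Fin d → ℤ) → ℂ)
    (hfsum : Summable fun j : Fin d → ℤ => ‖fhat j‖)
    (hgsum : Summable fun j : Fin d → ℤ => ‖ghat j‖)
    (f g Hf Hg : (Fin d → ℝ) → ℂ)
    (hf : ∀ α, f α = ∑' j : Fin d → ℤ,
      fhat j * Complex.exp (Complex.I * ((∑ i, (j i : ℝ) * α i : ℝ) : ℂ)))
    (hg : ∀ α, g α = ∑' j : Fin d → ℤ,
      ghat j * Complex.exp (Complex.I * ((∑ i, (j i : ℝ) * α i : ℝ) : ℂ)))
    (hHf : ∀ α, Hf α = ∑' j : Fin d → ℤ,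
      (-Complex.I) * (Real.sign (∑ i, (j i : ℝ) * k i) : ℂ) * fhat j *
        Complex.exp (Complex.I * ((∑ i, (j i : ℝ) * α i : ℝ) : ℂ)))
    (hHg : ∀ α, Hg α = ∑' j : Fin d → ℤ,
      (-Complex.I) * (Real.sign (∑ i, (j i : ℝ) * k i) : ℂ) * ghat j *
        Complex.exp (Complex.I * ((∑ i, (j i : ℝ) * α i : ℝ) : ℂ))) :
    ((1 / (2 * Real.pi) ^ d : ℝ) : ℂ) *
      ∫ α in Set.pi Set.univ (fun _ : Fin d => Set.Icc (0 : ℝ) (2 * Real.pi)),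
        (f α * g α - Hf α * Hg α) =
    ∑' j : {j : Fin d → ℤ // (∑ i, (j i : ℝ) * k i) = 0}, fhat j.1 * ghat (-j.1) := by
  classical
  set T := Set.pi Set.univ (fun _ : Fin d => Set.Icc (0 : ℝ) (2 * Real.pi)) with hT
  have hTc : IsCompact T := isCompact_univ_pi fun _ => isCompact_Icc
  set σ : (Fin d → ℤ) → ℂ := fun j => ((Real.sign (∑ i, (j i : ℝ) * k i) : ℝ) : ℂ) with hσ
  set F' : (Fin d → ℤ) → ℂ := fun j => -Complex.I * σ j * fhat j with hF'
  set G' : (Fin d → ℤ) → ℂ := fun j => -Complex.I * σ j * ghat j with hG'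
  set c : (Fin d → ℤ) × (Fin d → ℤ) → ℂ :=
    fun p => fhat p.1 * ghat p.2 - F' p.1 * G' p.2 with hc
  have hσle : ∀ j, ‖σ j‖ ≤ 1 := by
    intro j
    rcases Real.sign_apply_eq (∑ i, (j i : ℝ) * k i) with h | h | h <;> simp [hσ, h]
  have hF'le : ∀ j, ‖F' j‖ ≤ ‖fhat j‖ := by
    intro j
    calc ‖F' j‖ = ‖σ j‖ * ‖fhat j‖ := by simp [hF', norm_mul]
    _ ≤ 1 * ‖fhat j‖ := mul_le_mul_of_nonneg_right (hσle j) (norm_nonneg _)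
    _ = ‖fhat j‖ := one_mul _
  have hG'le : ∀ j, ‖G' j‖ ≤ ‖ghat j‖ := by
    intro j
    calc ‖G' j‖ = ‖σ j‖ * ‖ghat j‖ := by simp [hG', norm_mul]
    _ ≤ 1 * ‖ghat j‖ := mul_le_mul_of_nonneg_right (hσle j) (norm_nonneg _)
    _ = ‖ghat j‖ := one_mul _
  have hF'sum : Summable fun j => ‖F' j‖ :=
    Summable.of_nonneg_of_le (fun _ => norm_nonneg _) hF'le hfsum
  have hG'sum : Summable fun j => ‖G' j‖ :=
    Summable.of_nonneg_of_le (fun _ => norm_nonneg _) hG'le hgsum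
  have hprod : Summable fun p : (Fin d → ℤ) × (Fin d → ℤ) => ‖fhat p.1‖ * ‖ghat p.2‖ :=
    hfsum.mul_of_nonneg hgsum (fun _ => norm_nonneg _) (fun _ => norm_nonneg _)
  have hcsum : Summable fun p => ‖c p‖ := by
    refine Summable.of_nonneg_of_le (fun _ => norm_nonneg _) ?_ (hprod.mul_left 2)
    intro p
    calc ‖c p‖ ≤ ‖fhat p.1 * ghat p.2‖ + ‖F' p.1 * G' p.2‖ := norm_sub_le _ _
    _ ≤ ‖fhat p.1‖ * ‖ghat p.2‖ + ‖fhat p.1‖ * ‖ghat p.2‖ := by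
        rw [norm_mul, norm_mul]
        exact add_le_add le_rfl
          (mul_le_mul (hF'le p.1) (hG'le p.2) (norm_nonneg _) (norm_nonneg _))
    _ = 2 * (‖fhat p.1‖ * ‖ghat p.2‖) := by ring
  -- pointwise identity
  have hpt : ∀ α, f α * g α - Hf α * Hg α
      = ∑' p : (Fin d → ℤ) × (Fin d → ℤ), c p * E d (p.1 + p.2) α := by
    intro α
    have hfa : Summable fun j => ‖fhat j * E d j α‖ := by
      simpa only [norm_mul, norm_E, mul_one] using hfsum
    have hga : Summable fun j => ‖ghat j * E d j α‖ := by
      simpa only [norm_mul, norm_E, mul_one] using hgsum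
    have hF'a : Summable fun j => ‖F' j * E d j α‖ := by
      simpa only [norm_mul, norm_E, mul_one] using hF'sum
    have hG'a : Summable fun j => ‖G' j * E d j α‖ := by
      simpa only [norm_mul, norm_E, mul_one] using hG'sum
    have h1 : f α * g α
        = ∑' p : (Fin d → ℤ) × (Fin d → ℤ),
            (fhat p.1 * E d p.1 α) * (ghat p.2 * E d p.2 α) := by
      rw [hf α, hg α]
      exact tsum_mul_tsum_of_summable_norm hfa hga
    have h2 : Hf α * Hg α
        = ∑' p : (Fin d → ℤ) × (Fin d → ℤ),
            (F' p.1 * E d p.1 α) * (G' p.2 * E d p.2 α) := by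
      rw [hHf α, hHg α]
      exact tsum_mul_tsum_of_summable_norm hF'a hG'a
    rw [h1, h2, ← Summable.tsum_sub (summable_mul_of_summable_norm (R := ℂ) hfa hga)
      (summable_mul_of_summable_norm (R := ℂ) hF'a hG'a)]
    refine tsum_congr fun p => ?_
    rw [hc]
    simp only []
    rw [← E_mul]
    ring
  -- interchange integral and sum
  have hint : ∀ p : (Fin d → ℤ) × (Fin d → ℤ),
      Integrable (fun α => c p * E d (p.1 + p.2) α) (volume.restrict T) :=
    fun p => (continuous_const.mul (continuous_E _)).continuousOn.integrableOn_compact hTc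
  have hnorm : ∀ p : (Fin d → ℤ) × (Fin d → ℤ),
      (∫ α in T, ‖c p * E d (p.1 + p.2) α‖) = (volume T).toReal * ‖c p‖ := by
    intro p
    simp_rw [norm_mul, norm_E, mul_one]
    rw [setIntegral_const]
    simp [smul_eq_mul, Measure.real]
  have hswap : ∫ α in T, (∑' p : (Fin d → ℤ) × (Fin d → ℤ), c p * E d (p.1 + p.2) α)
      = ∑' p : (Fin d → ℤ) × (Fin d → ℤ), ∫ α in T, c p * E d (p.1 + p.2) α := by
    refine (integral_tsum_of_summable_integral_norm hint ?_).symm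
    simp_rw [hnorm]
    exact hcsum.mul_left _
  have h2pid : (((2 * Real.pi) ^ d : ℝ) : ℂ) ≠ 0 := by
    have : ((2 * Real.pi) ^ d : ℝ) ≠ 0 := by positivity
    exact_mod_cast this
  calc ((1 / (2 * Real.pi) ^ d : ℝ) : ℂ) * ∫ α in T, (f α * g α - Hf α * Hg α)
      = ((1 / (2 * Real.pi) ^ d : ℝ) : ℂ) *
          ∑' p : (Fin d → ℤ) × (Fin d → ℤ),
            c p * (if p.1 + p.2 = 0 then (((2*Real.pi)^d : ℝ) : ℂ) else 0) := by
        simp_rw [hpt]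
        rw [hswap]
        congr 1
        refine tsum_congr fun p => ?_
        rw [MeasureTheory.integral_const_mul, integral_E]
    _ = ∑' p : (Fin d → ℤ) × (Fin d → ℤ), (if p.1 + p.2 = 0 then c p else 0) := by
        rw [← tsum_mul_left]
        refine tsum_congr fun p => ?_
        by_cases h : p.1 + p.2 = 0
        · rw [if_pos h, if_pos h, mul_comm (c p), ← mul_assoc, ← Complex.ofReal_mul,
            one_div, inv_mul_cancel₀ (by positivity : ((2*Real.pi)^d : ℝ) ≠ 0),
            Complex.ofReal_one, one_mul]
        · rw [if_neg h, if_neg h, mul_zero, mul_zero]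
    _ = ∑' j : Fin d → ℤ,
          (if (∑ i, (j i : ℝ) * k i) = 0 then fhat j * ghat (-j) else 0) := by
        have hinj : Function.Injective (fun j : Fin d → ℤ => ((j, -j) :
            (Fin d → ℤ) × (Fin d → ℤ))) := fun a b hab => congrArg Prod.fst hab
        have hsupp : Function.support
            (fun p : (Fin d → ℤ) × (Fin d → ℤ) => if p.1 + p.2 = 0 then c p else 0)
            ⊆ Set.range (fun j : Fin d → ℤ => ((j, -j) :
              (Fin d → ℤ) × (Fin d → ℤ))) := by
          intro p hp
          have h0 : p.1 + p.2 = 0 := by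
            by_contra h
            exact hp (if_neg h)
          refine ⟨p.1, ?_⟩
          have : p.2 = -p.1 := by
            have := congrArg (fun q => q - p.1) h0
            simpa [add_sub_cancel_left] using eq_neg_of_add_eq_zero_right h0
          simp [this.symm]
        rw [← Function.Injective.tsum_eq hinj hsupp]
        refine tsum_congr fun j => ?_
        have hadd : j + -j = 0 := by simp
        rw [if_pos hadd]
        have hnegsum : (∑ i, ((-j) i : ℝ) * k i) = -(∑ i, (j i : ℝ) * k i) := by
          rw [← Finset.sum_neg_distrib]
          exact Finset.sum_congr rfl fun i _ => by
            simp only [Pi.neg_apply]; push_cast; ring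
        by_cases h0 : (∑ i, (j i : ℝ) * k i) = 0
        · rw [if_pos h0]
          have hσ0 : σ j = 0 := by simp [hσ, h0, Real.sign_zero]
          simp [hc, hF', hσ0]
        · rw [if_neg h0]
          have hσneg : σ (-j) = -σ j := by
            simp only [hσ, hnegsum, Real.sign_neg]
            push_cast
            ring
          rcases lt_or_gt_of_ne h0 with hlt | hlt
          · have hs : Real.sign (∑ i, (j i : ℝ) * k i) = -1 := Real.sign_of_neg hlt
            have hσj : σ j = -1 := by simp [hσ, hs]
            have hσnj : σ (-j) = 1 := by rw [hσneg, hσj]; try ring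
            simp only [hc, hF', hG', hσj, hσnj]
            linear_combination (fhat j * ghat (-j)) * Complex.I_sq
          · have hs : Real.sign (∑ i, (j i : ℝ) * k i) = 1 := Real.sign_of_pos hlt
            have hσj : σ j = 1 := by simp [hσ, hs]
            have hσnj : σ (-j) = -1 := by rw [hσneg, hσj]; try ring
            simp only [hc, hF', hG', hσj, hσnj]
            linear_combination (fhat j * ghat (-j)) * Complex.I_sq
    _ = ∑' j : {j : Fin d → ℤ // (∑ i, (j i : ℝ) * k i) = 0}, fhat j.1 * ghat (-j.1) := by
        refine (((tsum_subtype {j : Fin d → ℤ | (∑ i, (j i : ℝ) * k i) = 0}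
          (fun j => fhat j * ghat (-j))).trans (tsum_congr fun j => ?_))).symm
        simp [Set.indicator_apply, Set.mem_setOf_eq]
end Stmt4Aux
end

section
/- Let ζ : ℝ → ℂ be a C¹ curve with |ζ(α) − α| ≤ M, and let z₀, z₁ ∈ ℂ be points such that the line segment [z₀,z₁] does not intersect the curve ζ(ℝ). If the limit n₁(z₀) = lim_{a→∞} (1/(2πi)) ∫_{−a}^{a} ζ'(α)/(ζ(α)−z₀) dα exists, then n₁(z₁) exists and n₁(z₁) = n₁(z₀). -/
open Filter

/-- Let `ζ : ℝ → ℂ` be a `C¹` curve with `|ζ(α) − α| ≤ M`, and let `z₀, z₁`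
be points such that the segment `[z₀, z₁]` does not meet the curve. If the
limit `n₁(z₀)` of `(1/(2πi)) ∫_{−a}^{a} ζ'(α)/(ζ(α)−z₀) dα` exists, then
`n₁(z₁)` exists and equals `n₁(z₀)`. -/
theorem stmt9 (M : ℝ) (ζ : ℝ → ℂ) (hC1 : ContDiff ℝ 1 ζ)
    (hb : ∀ α : ℝ, ‖ζ α - (α : ℂ)‖ ≤ M) (z₀ z₁ : ℂ)
    (hseg : ∀ α : ℝ, ζ α ∉ segment ℝ z₀ z₁) (L : ℂ)
    (h0 : Tendsto (fun a : ℝ =>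
        (1 / (2 * (Real.pi : ℂ) * Complex.I)) *
          ∫ α in (-a)..a, deriv ζ α / (ζ α - z₀)) atTop (nhds L)) :
    Tendsto (fun a : ℝ =>
      (1 / (2 * (Real.pi : ℂ) * Complex.I)) *
        ∫ α in (-a)..a, deriv ζ α / (ζ α - z₁)) atTop (nhds L) := by
  set c : ℂ := 1 / (2 * (Real.pi : ℂ) * Complex.I) with hc
  set w : ℝ → ℂ := fun α => (ζ α - z₁) / (ζ α - z₀) with hwdef
  have hne0 : ∀ α, ζ α - z₀ ≠ 0 := by
    intro α h
    rw [sub_eq_zero] at h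
    exact hseg α (h ▸ left_mem_segment ℝ z₀ z₁)
  have hne1 : ∀ α, ζ α - z₁ ≠ 0 := by
    intro α h
    rw [sub_eq_zero] at h
    exact hseg α (h ▸ right_mem_segment ℝ z₀ z₁)
  -- the ratio avoids the closed negative real axis
  have hslit : ∀ α, w α ∈ Complex.slitPlane := by
    intro α
    by_contra h
    rw [Complex.mem_slitPlane_iff] at h
    push_neg at h
    obtain ⟨hre, him⟩ := h
    set r : ℝ := (w α).re with hr
    have hwr : w α = (r : ℂ) := Complex.ext rfl (by simpa using him)
    have h' : ζ α - z₁ = (r : ℂ) * (ζ α - z₀) := by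
      have h2 : (ζ α - z₁) / (ζ α - z₀) = (r : ℂ) := hwr
      rw [div_eq_iff (hne0 α)] at h2
      linear_combination h2
    have h1r : (0:ℝ) < 1 - r := by linarith
    have h1rC : (1:ℂ) - (r:ℂ) ≠ 0 := by
      have h3 : ((1 - r : ℝ) : ℂ) ≠ 0 := by exact_mod_cast h1r.ne'
      push_cast at h3; exact h3
    refine hseg α ⟨-r/(1-r), 1/(1-r), div_nonneg (by linarith) h1r.le,
      div_nonneg zero_le_one h1r.le, by field_simp; ring, ?_⟩
    rw [Complex.real_smul, Complex.real_smul]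
    push_cast
    field_simp
    linear_combination (-1 : ℂ) * h'
  have hζd : ∀ α, HasDerivAt ζ (deriv ζ α) α :=
    fun α => ((hC1.differentiable one_ne_zero) α).hasDerivAt
  -- log (w ·) is a primitive of the difference of integrands
  have hlog : ∀ α, HasDerivAt (fun x => Complex.log (w x))
      (deriv ζ α / (ζ α - z₁) - deriv ζ α / (ζ α - z₀)) α := by
    intro α
    have h1 : HasDerivAt (fun x => ζ x - z₁) (deriv ζ α) α := (hζd α).sub_const _
    have h0' : HasDerivAt (fun x => ζ x - z₀) (deriv ζ α) α := (hζd α).sub_const _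
    have hd : HasDerivAt (fun x => (ζ x - z₁) / (ζ x - z₀))
        ((deriv ζ α * (ζ α - z₀) - (ζ α - z₁) * deriv ζ α) / (ζ α - z₀) ^ 2) α :=
      h1.div h0' (hne0 α)
    have h2 : HasDerivAt (fun x => Complex.log ((ζ x - z₁) / (ζ x - z₀)))
        (((deriv ζ α * (ζ α - z₀) - (ζ α - z₁) * deriv ζ α) / (ζ α - z₀) ^ 2) /
          ((ζ α - z₁) / (ζ α - z₀))) α := hd.clog_real (hslit α)
    have h3 : (fun x => Complex.log (w x)) = fun x => Complex.log ((ζ x - z₁) / (ζ x - z₀)) := rfl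
    rw [h3]
    convert h2 using 1
    field_simp [hne0 α, hne1 α]
  have hderiv_cont : Continuous (deriv ζ) := hC1.continuous_deriv le_rfl
  have hcont : ∀ z : ℂ, (∀ α, ζ α - z ≠ 0) →
      Continuous (fun α => deriv ζ α / (ζ α - z)) := fun z hz =>
    hderiv_cont.div (hC1.continuous.sub continuous_const) hz
  -- integral identity
  have key : ∀ a : ℝ, (∫ α in (-a)..a, deriv ζ α / (ζ α - z₁)) =
      (∫ α in (-a)..a, deriv ζ α / (ζ α - z₀)) +
        (Complex.log (w a) - Complex.log (w (-a))) := by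
    intro a
    have hint0 : IntervalIntegrable (fun α => deriv ζ α / (ζ α - z₀)) MeasureTheory.volume (-a) a :=
      (hcont z₀ hne0).intervalIntegrable _ _
    have hint1 : IntervalIntegrable (fun α => deriv ζ α / (ζ α - z₁)) MeasureTheory.volume (-a) a :=
      (hcont z₁ hne1).intervalIntegrable _ _
    have hsub := intervalIntegral.integral_eq_sub_of_hasDerivAt
      (f := fun x => Complex.log (w x)) (fun x _ => hlog x) (hint1.sub hint0)
    rw [intervalIntegral.integral_sub hint1 hint0] at hsub
    linear_combination hsub
  -- boundary terms tend to zero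
  have hlb : ∀ α : ℝ, |α| - (M + ‖z₀‖) ≤ ‖ζ α - z₀‖ := by
    intro α
    have h1 : ‖(α:ℂ)‖ ≤ ‖ζ α - z₀‖ + ‖ζ α - α‖ + ‖z₀‖ := by
      calc ‖(α:ℂ)‖ = ‖(ζ α - z₀) - (ζ α - α) + z₀‖ := by ring_nf
        _ ≤ ‖(ζ α - z₀) - (ζ α - α)‖ + ‖z₀‖ := norm_add_le _ _
        _ ≤ ‖ζ α - z₀‖ + ‖ζ α - α‖ + ‖z₀‖ := by
            have := norm_sub_le (ζ α - z₀) (ζ α - (α:ℂ)); linarith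
    have h2 : ‖(α:ℂ)‖ = |α| := by simp
    have h3 := hb α
    rw [h2] at h1
    linarith
  have hwtend : ∀ u : ℝ → ℝ, Tendsto (fun a => ‖ζ (u a) - z₀‖) atTop atTop →
      Tendsto (fun a => Complex.log (w (u a))) atTop (nhds 0) := by
    intro u hu
    have h1 : Tendsto (fun a => w (u a)) atTop (nhds 1) := by
      have heq : ∀ a, w (u a) = 1 + (z₀ - z₁) / (ζ (u a) - z₀) := by
        intro a; rw [hwdef]; field_simp [hne0 (u a)]; ring
      have hz : Tendsto (fun a => (z₀ - z₁) / (ζ (u a) - z₀)) atTop (nhds 0) := by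
        rw [tendsto_zero_iff_norm_tendsto_zero]
        simp only [norm_div]
        exact tendsto_const_nhds.div_atTop hu
      have hadd : Tendsto (fun a => 1 + (z₀ - z₁) / (ζ (u a) - z₀)) atTop (nhds (1 + 0)) :=
        tendsto_const_nhds.add hz
      rw [add_zero] at hadd
      exact hadd.congr fun a => (heq a).symm
    have hcl : ContinuousAt Complex.log 1 :=
      continuousAt_clog Complex.one_mem_slitPlane
    have := hcl.tendsto.comp h1
    simpa [Complex.log_one, Function.comp_def] using this
  have htop : Tendsto (fun a => Complex.log (w a)) atTop (nhds 0) := by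
    refine hwtend id ?_
    refine tendsto_atTop_mono (fun a => ?_) (tendsto_atTop_add_const_right _ (-(M + ‖z₀‖)) tendsto_id)
    have := hlb a
    have : a ≤ |a| := le_abs_self a
    have := hlb a
    simp only [id]
    have h4 := le_abs_self a
    linarith [hlb a]
  have hbot : Tendsto (fun a => Complex.log (w (-a))) atTop (nhds 0) := by
    refine hwtend (fun a => -a) ?_
    refine tendsto_atTop_mono (fun a => ?_) (tendsto_atTop_add_const_right _ (-(M + ‖z₀‖)) tendsto_id)
    simp only [id_eq]
    have h4 : a ≤ |(-a : ℝ)| := by rw [abs_neg]; exact le_abs_self a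
    linarith [hlb (-a)]
  have htail : Tendsto (fun a => c * (Complex.log (w a) - Complex.log (w (-a))))
      atTop (nhds 0) := by
    have := (htop.sub hbot).const_mul c
    simpa using this
  have final := h0.add htail
  rw [add_zero] at final
  refine final.congr fun a => ?_
  rw [key a]
  ring
end

section
/- Suppose z(w) is holomorphic on {Im w < ε}, |z(w) − w| ≤ M there, and ζ = z|_ℝ is injective. Then for z₀ ∉ ζ(ℝ), the number of solutions w in the open lower half-plane of z(w) = z₀ is 1 if z₀ lies in the region below the curve and 0 if z₀ lies in the region above the curve. -/
open Set Filter Metric Complex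
open scoped Topology

namespace Stmt10

lemma im_le_norm (u : ℂ) : u.im ≤ ‖u‖ :=
  (le_abs_self _).trans (Complex.abs_im_le_norm u)

-- generic local inverse packaging
lemma loc_inv {h : ℂ → ℂ} {w₀ c : ℂ} (hs : HasStrictDerivAt h c w₀) (hc : c ≠ 0)
    {ρ : ℝ} (hρ : 0 < ρ) :
    ∃ r δ : ℝ, 0 < r ∧ ball w₀ r ⊆ ball w₀ ρ ∧ 0 < δ ∧
      (∀ w₁ ∈ ball w₀ r, ∀ w₂ ∈ ball w₀ r, h w₁ = h w₂ → w₁ = w₂) ∧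
      (∀ y ∈ ball (h w₀) δ, ∃ w ∈ ball w₀ r, h w = y) := by
  set e := HasStrictFDerivAt.toOpenPartialHomeomorph h (hs.hasStrictFDerivAt_equiv hc) with he
  have hcoe : (e : ℂ → ℂ) = h := rfl
  have hsrc : w₀ ∈ e.source := HasStrictFDerivAt.mem_toOpenPartialHomeomorph_source (hs.hasStrictFDerivAt_equiv hc)
  have htgt : h w₀ ∈ e.target := by
    have := e.map_source hsrc
    rwa [hcoe] at this
  obtain ⟨r, hr0, hrsub⟩ : ∃ r > 0, ball w₀ r ⊆ e.source ∩ ball w₀ ρ := by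
    have : e.source ∩ ball w₀ ρ ∈ 𝓝 w₀ :=
      Filter.inter_mem (e.open_source.mem_nhds hsrc) (ball_mem_nhds _ hρ)
    exact Metric.mem_nhds_iff.mp this
  have hsymm : ContinuousAt e.symm (h w₀) := e.continuousAt_symm htgt
  have hsym0 : e.symm (h w₀) = w₀ := by
    have := e.left_inv hsrc; rwa [hcoe] at this
  obtain ⟨δ₁, hδ₁, hδsub⟩ : ∃ δ₁ > 0, ∀ y ∈ ball (h w₀) δ₁, e.symm y ∈ ball w₀ r := by
    have : e.symm ⁻¹' (ball w₀ r) ∈ 𝓝 (h w₀) := by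
      apply hsymm.preimage_mem_nhds
      rw [hsym0]
      exact ball_mem_nhds _ hr0
    obtain ⟨δ₁, hδ₁, hsub⟩ := Metric.mem_nhds_iff.mp this
    exact ⟨δ₁, hδ₁, fun y hy => hsub hy⟩
  obtain ⟨δ₂, hδ₂, hδ₂sub⟩ : ∃ δ₂ > 0, ball (h w₀) δ₂ ⊆ e.target :=
    Metric.mem_nhds_iff.mp (e.open_target.mem_nhds htgt)
  refine ⟨r, min δ₁ δ₂, hr0, fun x hx => (hrsub hx).2, lt_min hδ₁ hδ₂, ?_, ?_⟩
  · intro w₁ h₁ w₂ h₂ heq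
    have := e.injOn (hrsub h₁).1 (hrsub h₂).1
    rw [hcoe] at this
    exact this heq
  · intro y hy
    have hy₁ : y ∈ ball (h w₀) δ₁ := ball_subset_ball (min_le_left _ _) hy
    have hy₂ : y ∈ e.target := hδ₂sub (ball_subset_ball (min_le_right _ _) hy)
    refine ⟨e.symm y, hδsub y hy₁, ?_⟩
    have := e.right_inv hy₂
    rwa [hcoe] at this


section Main

variable {ε M : ℝ} {z : ℂ → ℂ}

lemma domOpen : IsOpen {w : ℂ | w.im < ε} := isOpen_lt Complex.continuous_im continuous_const

lemma lhpOpen : IsOpen {w : ℂ | w.im < 0} := isOpen_lt Complex.continuous_im continuous_const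

lemma clhpClosed : IsClosed {w : ℂ | w.im ≤ 0} := isClosed_le Complex.continuous_im continuous_const

lemma clhp_sub_dom (hε : 0 < ε) : {w : ℂ | w.im ≤ 0} ⊆ {w : ℂ | w.im < ε} :=
  fun w hw => lt_of_le_of_lt hw hε

lemma closed_image (hε : 0 < ε) (hM : 0 < M)
    (hz : DifferentiableOn ℂ z {w : ℂ | w.im < ε})
    (hb : ∀ w : ℂ, w.im < ε → ‖z w - w‖ ≤ M)
    {F : Set ℂ} (hF : IsClosed F) (hFs : F ⊆ {w : ℂ | w.im ≤ 0}) :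
    IsClosed (z '' F) := by
  apply isClosed_of_closure_subset
  intro v hv
  set R := ‖v‖ + M + 1 with hR
  have hK : IsCompact (F ∩ closedBall 0 R) :=
    (isCompact_closedBall 0 R).inter_left hF
  have hsub : F ∩ closedBall 0 R ⊆ {w : ℂ | w.im < ε} :=
    fun w hw => clhp_sub_dom hε (hFs hw.1)
  have hc : ContinuousOn z (F ∩ closedBall 0 R) := (hz.mono hsub).continuousOn
  have him : IsCompact (z '' (F ∩ closedBall 0 R)) := hK.image_of_continuousOn hc
  have hv' : v ∈ closure (z '' (F ∩ closedBall 0 R)) := by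
    rw [_root_.mem_closure_iff] at hv ⊢
    intro o ho hvo
    obtain ⟨y, ⟨hyo, hy1⟩, w, hwF, rfl⟩ :=
      hv (o ∩ ball v 1) (ho.inter isOpen_ball) ⟨hvo, mem_ball_self one_pos⟩
    refine ⟨z w, hyo, w, ⟨hwF, ?_⟩, rfl⟩
    have hwdom : w.im < ε := clhp_sub_dom hε (hFs hwF)
    have h1 : ‖z w - v‖ < 1 := by
      rw [mem_ball, dist_eq_norm] at hy1; exact hy1
    have h2 : ‖z w - w‖ ≤ M := hb w hwdom
    have : ‖w‖ ≤ ‖z w‖ + M := by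
      calc ‖w‖ = ‖z w - (z w - w)‖ := by ring_nf
        _ ≤ ‖z w‖ + ‖z w - w‖ := norm_sub_le _ _
        _ ≤ ‖z w‖ + M := by linarith
    have : ‖w‖ ≤ ‖v‖ + 1 + M := by
      have : ‖z w‖ ≤ ‖v‖ + 1 := by
        calc ‖z w‖ = ‖v + (z w - v)‖ := by ring_nf
          _ ≤ ‖v‖ + ‖z w - v‖ := norm_add_le _ _
          _ ≤ ‖v‖ + 1 := by linarith
      linarith
    simp only [mem_closedBall, dist_zero_right]
    linarith
  have := him.isClosed.closure_subset hv'
  exact image_mono (f := z) inter_subset_left this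

lemma zAnalytic (hε : 0 < ε) (hz : DifferentiableOn ℂ z {w : ℂ | w.im < ε})
    {w₀ : ℂ} (hw₀ : w₀.im < ε) : AnalyticAt ℂ z w₀ :=
  (hz.analyticOnNhd domOpen) w₀ hw₀

lemma nhds_le (hε : 0 < ε) (hM : 0 < M)
    (hz : DifferentiableOn ℂ z {w : ℂ | w.im < ε})
    (hb : ∀ w : ℂ, w.im < ε → ‖z w - w‖ ≤ M)
    {w₀ : ℂ} (hw₀ : w₀.im < ε) :
    𝓝 (z w₀) ≤ Filter.map z (𝓝 w₀) := by
  rcases (zAnalytic hε hz hw₀).eventually_constant_or_nhds_le_map_nhds with hconst | hle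
  · exfalso
    have han : AnalyticOnNhd ℂ z {w : ℂ | w.im < ε} := hz.analyticOnNhd domOpen
    have hconstOn : EqOn z (fun _ => z w₀) {w : ℂ | w.im < ε} :=
      han.eqOn_of_preconnected_of_eventuallyEq analyticOnNhd_const
        (convex_halfSpace_im_lt ε).isPreconnected hw₀ hconst
    set b : ℂ := w₀ - ((2 * M + 1 : ℝ) : ℂ) with hbdef
    have hbim : b.im = w₀.im := by simp [hbdef]
    have hbz : z b = z w₀ := hconstOn (by rw [mem_setOf_eq, hbim]; exact hw₀)
    have h1 : ‖z w₀ - w₀‖ ≤ M := hb w₀ hw₀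
    have h2 : ‖z b - b‖ ≤ M := hb b (by rw [hbim]; exact hw₀)
    rw [hbz] at h2
    have : ‖w₀ - b‖ ≤ 2 * M := by
      calc ‖w₀ - b‖ = ‖(z w₀ - b) - (z w₀ - w₀)‖ := by ring_nf
        _ ≤ ‖z w₀ - b‖ + ‖z w₀ - w₀‖ := norm_sub_le _ _
        _ ≤ 2 * M := by linarith
    have h3 : ‖w₀ - b‖ = 2 * M + 1 := by
      rw [hbdef]
      simp only [sub_sub_cancel]
      rw [Complex.norm_real, Real.norm_eq_abs, abs_of_pos (by linarith : (0:ℝ) < 2 * M + 1)]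
    linarith
  · exact hle

lemma strictD (hε : 0 < ε) (hz : DifferentiableOn ℂ z {w : ℂ | w.im < ε})
    {w₀ : ℂ} (hw₀ : w₀.im < ε) : HasStrictDerivAt z (deriv z w₀) w₀ :=
  ((zAnalytic hε hz hw₀).contDiffAt (n := 1)).hasStrictDerivAt one_ne_zero

lemma gderiv (hε : 0 < ε) (hM : 0 < M)
    (hz : DifferentiableOn ℂ z {w : ℂ | w.im < ε})
    (hb : ∀ w : ℂ, w.im < ε → ‖z w - w‖ ≤ M)
    {w : ℂ} (hw : w.im ≤ -(2 * M)) : ‖deriv z w - 1‖ ≤ 1 / 2 := by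
  set g : ℂ → ℂ := fun w => z w - w with hg
  have hball : closedBall w (2 * M) ⊆ {x : ℂ | x.im < ε} := by
    intro x hx
    rw [mem_closedBall, dist_eq_norm] at hx
    have : |(x - w).im| ≤ ‖x - w‖ := Complex.abs_im_le_norm _
    have : x.im - w.im ≤ 2 * M := by
      have := (le_abs_self ((x - w).im)).trans ((Complex.abs_im_le_norm _).trans hx)
      simpa [Complex.sub_im] using this
    have : x.im ≤ 0 := by linarith
    exact lt_of_le_of_lt this hε
  have hgdiff : DifferentiableOn ℂ g {x : ℂ | x.im < ε} := hz.sub differentiableOn_id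
  have hdc : DiffContOnCl ℂ g (ball w (2 * M)) := by
    apply DifferentiableOn.diffContOnCl
    rw [closure_ball w (by positivity : (2:ℝ) * M ≠ 0)]
    exact hgdiff.mono hball
  have hest : ‖deriv g w‖ ≤ M / (2 * M) := by
    apply Complex.norm_deriv_le_of_forall_mem_sphere_norm_le (by positivity) hdc
    intro x hx
    exact hb x (hball (sphere_subset_closedBall hx))
  have hMd : M / (2 * M) = 1 / 2 := by field_simp
  rw [hMd] at hest
  have hderiv : deriv g w = deriv z w - 1 := by
    have h1 : DifferentiableAt ℂ z w := hz.differentiableAt (domOpen.mem_nhds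
      (hball (mem_closedBall_self (by positivity))))
    have : deriv g w = deriv z w - deriv (fun x : ℂ => x) w := by
      rw [hg]; exact deriv_fun_sub h1 differentiableAt_fun_id
    simpa using this
  rwa [hderiv] at hest

lemma deep_unique (hε : 0 < ε) (hM : 0 < M)
    (hz : DifferentiableOn ℂ z {w : ℂ | w.im < ε})
    (hb : ∀ w : ℂ, w.im < ε → ‖z w - w‖ ≤ M)
    {v : ℂ} (hv : v.im ≤ -(3 * M + 1)) {w₁ w₂ : ℂ}
    (h1e : w₁.im < ε) (h2e : w₂.im < ε) (hz1 : z w₁ = v) (hz2 : z w₂ = v) :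
    w₁ = w₂ := by
  set g : ℂ → ℂ := fun w => z w - w with hg
  have key : ∀ w : ℂ, w.im < ε → z w = v → w ∈ ball v (M + 1) := by
    intro w hwe hwv
    rw [mem_ball, dist_eq_norm]
    have : ‖w - v‖ = ‖z w - w‖ := by
      rw [← hwv]; rw [← norm_neg]; ring_nf
    rw [this]
    exact lt_of_le_of_lt (hb w hwe) (by linarith)
  have hs : ∀ x ∈ ball v (M + 1), x.im ≤ -(2 * M) := by
    intro x hx
    rw [mem_ball, dist_eq_norm] at hx
    have : x.im - v.im ≤ M + 1 := by
      have := (le_abs_self ((x - v).im)).trans ((Complex.abs_im_le_norm _).trans hx.le)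
      simpa [Complex.sub_im] using this
    linarith
  have hse : ∀ x ∈ ball v (M + 1), x.im < ε := fun x hx =>
    lt_of_le_of_lt (le_trans (hs x hx) (by linarith)) hε
  have hdiff : ∀ x ∈ ball v (M + 1), DifferentiableAt ℂ g x := by
    intro x hx
    have h1 : DifferentiableAt ℂ z x := hz.differentiableAt (domOpen.mem_nhds (hse x hx))
    exact h1.sub differentiableAt_fun_id
  have hbound : ∀ x ∈ ball v (M + 1), ‖deriv g x‖ ≤ 1 / 2 := by
    intro x hx
    have := gderiv hε hM hz hb (hs x hx)
    have hderiv : deriv g x = deriv z x - 1 := by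
      have h1 : DifferentiableAt ℂ z x := hz.differentiableAt (domOpen.mem_nhds (hse x hx))
      have : deriv g x = deriv z x - deriv (fun x : ℂ => x) x := by
        rw [hg]; exact deriv_fun_sub h1 differentiableAt_fun_id
      simpa using this
    rwa [hderiv]
  have hmv := (convex_ball v (M + 1)).norm_image_sub_le_of_norm_deriv_le hdiff hbound
    (key w₁ h1e hz1) (key w₂ h2e hz2)
  have heq1 : g w₁ = v - w₁ := by rw [hg]; simp [hz1]
  have heq2 : g w₂ = v - w₂ := by rw [hg]; simp [hz2]
  have : ‖w₂ - w₁‖ ≤ 1 / 2 * ‖w₂ - w₁‖ := by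
    have : g w₂ - g w₁ = w₁ - w₂ := by rw [heq1, heq2]; ring
    calc ‖w₂ - w₁‖ = ‖w₁ - w₂‖ := by rw [norm_sub_rev]
      _ = ‖g w₂ - g w₁‖ := by rw [this]
      _ ≤ 1 / 2 * ‖w₂ - w₁‖ := hmv
  have hn : ‖w₂ - w₁‖ = 0 := by
    have := norm_nonneg (w₂ - w₁); linarith
  have := norm_eq_zero.mp hn
  linear_combination -this


lemma root_norm_lt {n : ℕ} (hn : n ≠ 0) {t x : ℂ} {δ : ℝ} (hδ : 0 < δ)
    (ht : t ^ n = x) (hx : ‖x‖ < δ ^ n) : ‖t‖ < δ := by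
  by_contra hcon
  push_neg at hcon
  have : δ ^ n ≤ ‖t‖ ^ n := pow_le_pow_left₀ hδ.le hcon n
  rw [← norm_pow, ht] at this
  linarith

lemma exp_root {n : ℕ} (hn : n ≠ 0) {x : ℂ} (hx : x ≠ 0) :
    (Complex.exp (Complex.log x / n)) ^ n = x := by
  rw [← Complex.exp_nat_mul, mul_div_cancel₀ _ (Nat.cast_ne_zero.mpr hn : (n : ℂ) ≠ 0),
    Complex.exp_log hx]

lemma zeta_ne_one {n : ℕ} (hn : 2 ≤ n) : Complex.exp (2 * Real.pi * I / n) ≠ 1 := by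
  intro hcon
  rw [Complex.exp_eq_one_iff] at hcon
  obtain ⟨k, hk⟩ := hcon
  have hn0 : (n : ℂ) ≠ 0 := Nat.cast_ne_zero.mpr (by omega)
  have h2 : (2 * Real.pi * I : ℂ) ≠ 0 := Complex.two_pi_I_ne_zero
  field_simp at hk
  have h3 : ((k * n : ℤ) : ℂ) * (2 * Real.pi * I) = 1 * (2 * Real.pi * I) := by
    push_cast
    linear_combination -(2 * Real.pi * I) * hk
  have hkn : ((k * n : ℤ) : ℂ) = 1 := mul_right_cancel₀ h2 h3
  have : (k * n : ℤ) = 1 := by exact_mod_cast hkn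
  have : (n : ℤ) ∣ 1 := Dvd.intro k (by linarith [this])
  have := Int.le_of_dvd one_pos this
  omega

lemma dbl (hε : 0 < ε) (hM : 0 < M)
    (hz : DifferentiableOn ℂ z {w : ℂ | w.im < ε})
    (hb : ∀ w : ℂ, w.im < ε → ‖z w - w‖ ≤ M)
    {w₀ : ℂ} (hw₀ : w₀.im < 0) (hd : deriv z w₀ = 0) :
    ∀ᶠ v in 𝓝 (z w₀), v = z w₀ ∨
      ∃ w₁ w₂, w₁ ≠ w₂ ∧ w₁.im < 0 ∧ w₂.im < 0 ∧ z w₁ = v ∧ z w₂ = v := by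
  have hw₀ε : w₀.im < ε := hw₀.trans hε
  set f : ℂ → ℂ := fun w => z w - z w₀ with hf
  have hfA : AnalyticAt ℂ f w₀ := (zAnalytic hε hz hw₀ε).sub analyticAt_const
  have hnev : ¬ ∀ᶠ w in 𝓝 w₀, f w = 0 := by
    intro hcon
    have h2 := nhds_le hε hM hz hb hw₀ε
    have hmem : {z w₀} ∈ Filter.map z (𝓝 w₀) := by
      rw [Filter.mem_map]
      filter_upwards [hcon] with w hw
      rw [hf] at hw
      simp only [mem_preimage, mem_singleton_iff]
      linear_combination hw
    have hs : {z w₀} ∈ 𝓝 (z w₀) := h2 hmem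
    obtain ⟨δ, hδ, hsub⟩ := Metric.mem_nhds_iff.mp hs
    have hmem2 : z w₀ + ((δ / 2 : ℝ) : ℂ) ∈ ball (z w₀) δ := by
      rw [mem_ball, dist_eq_norm]
      simp only [add_sub_cancel_left, Complex.norm_real, Real.norm_eq_abs]
      rw [abs_of_pos (by linarith)]
      linarith
    have := hsub hmem2
    rw [mem_singleton_iff] at this
    have : ((δ / 2 : ℝ) : ℂ) = 0 := by linear_combination this
    have : (δ / 2 : ℝ) = 0 := by exact_mod_cast this
    linarith
  have horder : analyticOrderAt f w₀ ≠ ⊤ := fun hcon => hnev (analyticOrderAt_eq_top.mp hcon)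
  obtain ⟨n, hn⟩ := ENat.ne_top_iff_exists.mp horder
  obtain ⟨g, hgA, hg0, hev⟩ := (hfA.analyticOrderAt_eq_natCast).mp hn.symm
  have hfw₀ : f w₀ = 0 := by rw [hf]; simp
  have hn0 : n ≠ 0 := by
    intro hcon
    have := hev.self_of_nhds
    rw [hcon, hfw₀] at this
    simp at this
    exact hg0 this.symm
  have hn1 : n ≠ 1 := by
    intro hcon
    subst hcon
    have hdf : deriv f w₀ = deriv z w₀ := by
      rw [hf]; exact deriv_sub_const _
    have hprod : HasDerivAt (fun w => (w - w₀) ^ 1 • g w)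
        (1 * g w₀ + (w₀ - w₀) * deriv g w₀) w₀ := by
      simp only [pow_one, smul_eq_mul]
      exact ((hasDerivAt_id w₀).sub_const w₀).mul hgA.differentiableAt.hasDerivAt
    have hev' : f =ᶠ[𝓝 w₀] (fun w => (w - w₀) ^ 1 • g w) := hev
    have : deriv f w₀ = g w₀ := by
      rw [hev'.deriv_eq, hprod.deriv]
      simp
    rw [hdf, hd] at this
    exact hg0 this.symm
  have hn2 : 2 ≤ n := by omega
  -- construct local n-th root of g
  set c : ℂ := Complex.exp (Complex.log (g w₀) / n) with hcdef
  have hc0 : c ≠ 0 := Complex.exp_ne_zero _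
  have hcn : c ^ n = g w₀ := exp_root hn0 hg0
  set r : ℂ → ℂ := fun w => c * Complex.exp (Complex.log (g w / g w₀) / n) with hrdef
  have hrA : AnalyticAt ℂ r w₀ := by
    apply analyticAt_const.mul
    apply analyticAt_cexp.comp
    apply AnalyticAt.div _ analyticAt_const (Nat.cast_ne_zero.mpr hn0)
    apply (analyticAt_clog _).comp (hgA.div analyticAt_const hg0)
    rw [Pi.div_apply, div_self hg0]
    exact Complex.one_mem_slitPlane
  have hrw₀ : r w₀ = c := by
    rw [hrdef]
    simp only [div_self hg0, Complex.log_one, zero_div, Complex.exp_zero, mul_one]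
  have hgne : ∀ᶠ w in 𝓝 w₀, g w ≠ 0 := hgA.continuousAt.eventually_ne hg0
  have hroot : ∀ᶠ w in 𝓝 w₀, (r w) ^ n = g w := by
    filter_upwards [hgne] with w hw
    rw [hrdef]
    simp only
    rw [mul_pow, hcn, ← Complex.exp_nat_mul,
      mul_div_cancel₀ _ (Nat.cast_ne_zero.mpr hn0 : (n : ℂ) ≠ 0),
      Complex.exp_log (div_ne_zero hw hg0)]
    field_simp
  set h : ℂ → ℂ := fun w => (w - w₀) * r w with hhdef
  have hfh : ∀ᶠ w in 𝓝 w₀, z w - z w₀ = (h w) ^ n := by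
    filter_upwards [hev, hroot] with w h1 h2
    rw [hhdef]
    simp only
    rw [mul_pow, h2]
    rw [hf] at h1
    simpa [smul_eq_mul] using h1
  have hhA : AnalyticAt ℂ h w₀ := ((analyticAt_id).sub analyticAt_const).mul hrA
  have hhd : HasDerivAt h c w₀ := by
    have hprod : HasDerivAt (fun w => (w - w₀) * r w)
        (1 * r w₀ + (w₀ - w₀) * deriv r w₀) w₀ :=
      ((hasDerivAt_id w₀).sub_const w₀).mul hrA.differentiableAt.hasDerivAt
    have : (1 : ℂ) * r w₀ + (w₀ - w₀) * deriv r w₀ = c := by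
      rw [hrw₀]; ring
    rw [hhdef]
    rw [this] at hprod
    exact hprod
  have hhs : HasStrictDerivAt h c w₀ := by
    have := (hhA.contDiffAt (n := 1)).hasStrictDerivAt one_ne_zero
    rwa [hhd.deriv] at this
  -- choose ρ
  obtain ⟨ρ₁, hρ₁, hρ₁sub⟩ := Metric.eventually_nhds_iff_ball.mp hfh
  obtain ⟨ρ₂, hρ₂, hρ₂sub⟩ : ∃ ρ₂ > 0, ball w₀ ρ₂ ⊆ {w : ℂ | w.im < 0} :=
    Metric.mem_nhds_iff.mp (lhpOpen.mem_nhds hw₀)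
  obtain ⟨rr, δ, hrr0, hrsub, hδ0, hinj, hsurj⟩ :=
    loc_inv hhs hc0 (lt_min hρ₁ hρ₂)
  have hh0 : h w₀ = 0 := by rw [hhdef]; simp
  rw [hh0] at hsurj
  -- conclude
  rw [Metric.eventually_nhds_iff_ball]
  refine ⟨δ ^ n, pow_pos hδ0 n, ?_⟩
  intro v hv
  by_cases hveq : v = z w₀
  · exact Or.inl hveq
  · right
    have hvne : v - z w₀ ≠ 0 := sub_ne_zero.mpr hveq
    have hvnorm : ‖v - z w₀‖ < δ ^ n := by
      rw [mem_ball, dist_eq_norm] at hv; exact hv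
    set s₁ : ℂ := Complex.exp (Complex.log (v - z w₀) / n) with hs₁def
    set s₂ : ℂ := Complex.exp ((Complex.log (v - z w₀) + 2 * Real.pi * I) / n) with hs₂def
    have hs₁n : s₁ ^ n = v - z w₀ := exp_root hn0 hvne
    have hs₂n : s₂ ^ n = v - z w₀ := by
      rw [hs₂def, ← Complex.exp_nat_mul,
        mul_div_cancel₀ _ (Nat.cast_ne_zero.mpr hn0 : (n : ℂ) ≠ 0),
        Complex.exp_add, Complex.exp_log hvne, Complex.exp_two_pi_mul_I, mul_one]
    have hs₁δ : ‖s₁‖ < δ := root_norm_lt hn0 hδ0 hs₁n hvnorm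
    have hs₂δ : ‖s₂‖ < δ := root_norm_lt hn0 hδ0 hs₂n hvnorm
    have hs₁₂ : s₁ ≠ s₂ := by
      intro hcon
      have hargs : (Complex.log (v - z w₀) + 2 * Real.pi * I) / n =
          Complex.log (v - z w₀) / n + 2 * Real.pi * I / n := by ring
      have hmul : s₂ = s₁ * Complex.exp (2 * Real.pi * I / n) := by
        rw [hs₂def, hargs, Complex.exp_add, hs₁def]
      have hs₁0 : s₁ ≠ 0 := Complex.exp_ne_zero _
      have h1 : s₁ * 1 = s₁ * Complex.exp (2 * Real.pi * I / n) := by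
        rw [mul_one]
        nth_rewrite 1 [hcon]
        exact hmul
      exact zeta_ne_one hn2 (mul_left_cancel₀ hs₁0 h1).symm
    obtain ⟨w₁, hw₁b, hw₁h⟩ := hsurj s₁ (by rw [mem_ball, dist_zero_right]; exact hs₁δ)
    obtain ⟨w₂, hw₂b, hw₂h⟩ := hsurj s₂ (by rw [mem_ball, dist_zero_right]; exact hs₂δ)
    have hball : ∀ w ∈ ball w₀ rr, w ∈ ball w₀ ρ₁ ∧ w.im < 0 := by
      intro w hw
      have := hrsub hw
      exact ⟨ball_subset_ball (min_le_left _ _) this,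
        hρ₂sub (ball_subset_ball (min_le_right _ _) this)⟩
    refine ⟨w₁, w₂, ?_, (hball w₁ hw₁b).2, (hball w₂ hw₂b).2, ?_, ?_⟩
    · intro hcon
      rw [hcon, hw₂h] at hw₁h
      exact hs₁₂ hw₁h.symm
    · have e1 := hρ₁sub w₁ (hball w₁ hw₁b).1
      rw [hw₁h, hs₁n] at e1
      linear_combination e1
    · have e2 := hρ₁sub w₂ (hball w₂ hw₂b).1
      rw [hw₂h, hs₂n] at e2
      linear_combination e2



/-- The key property: unique simple solution in the lower half-plane. -/
def P (z : ℂ → ℂ) (v : ℂ) : Prop :=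
  ∃ w, w.im < 0 ∧ z w = v ∧ deriv z w ≠ 0 ∧ ∀ w', w'.im < 0 → z w' = v → w' = w

lemma curve_closed (hε : 0 < ε) (hM : 0 < M)
    (hz : DifferentiableOn ℂ z {w : ℂ | w.im < ε})
    (hb : ∀ w : ℂ, w.im < ε → ‖z w - w‖ ≤ M) :
    IsClosed (z '' {w : ℂ | w.im = 0}) := by
  apply closed_image hε hM hz hb (isClosed_eq Complex.continuous_im continuous_const)
  intro w hw
  rw [mem_setOf_eq] at hw ⊢
  exact le_of_eq hw

lemma curve_im (hε : 0 < ε) (hM : 0 < M)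
    (hb : ∀ w : ℂ, w.im < ε → ‖z w - w‖ ≤ M)
    {v : ℂ} (hv : v ∈ z '' {w : ℂ | w.im = 0}) : -M ≤ v.im ∧ v.im ≤ M := by
  obtain ⟨α, hα, rfl⟩ := hv
  rw [mem_setOf_eq] at hα
  have hαε : α.im < ε := by rw [hα]; exact hε
  have h1 : |(z α - α).im| ≤ M := le_trans (Complex.abs_im_le_norm _) (hb α hαε)
  have h2 : (z α - α).im = (z α).im - α.im := Complex.sub_im _ _
  rw [abs_le] at h1
  rw [h2, hα] at h1
  constructor <;> linarith [h1.1, h1.2]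

lemma im_lt_of_ball {w₀ u : ℂ} {t : ℝ} (hu : u ∈ ball w₀ t) (ht : t ≤ -w₀.im) : u.im < 0 := by
  rw [mem_ball, dist_eq_norm] at hu
  have : u.im - w₀.im ≤ ‖u - w₀‖ := by
    have := (le_abs_self ((u - w₀).im)).trans (Complex.abs_im_le_norm _)
    simpa [Complex.sub_im] using this
  linarith

lemma Uopen (hε : 0 < ε) (hM : 0 < M)
    (hz : DifferentiableOn ℂ z {w : ℂ | w.im < ε})
    (hb : ∀ w : ℂ, w.im < ε → ‖z w - w‖ ≤ M)
    {v₀ : ℂ} (hc : v₀ ∉ z '' {w : ℂ | w.im = 0}) (hP : P z v₀) :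
    ∀ᶠ v in 𝓝 v₀, v ∉ z '' {w : ℂ | w.im = 0} ∧ P z v := by
  obtain ⟨w₀, hw₀im, hw₀z, hw₀d, huniq⟩ := hP
  have hw₀ε : w₀.im < ε := hw₀im.trans hε
  have hsD := strictD hε hz hw₀ε
  have hderivA : AnalyticOnNhd ℂ (deriv z) {w : ℂ | w.im < ε} := (hz.analyticOnNhd domOpen).deriv
  have hne : ∀ᶠ w in 𝓝 w₀, deriv z w ≠ 0 :=
    (hderivA w₀ hw₀ε).continuousAt.eventually_ne hw₀d
  obtain ⟨ρ₁, hρ₁, hρ₁sub⟩ := Metric.eventually_nhds_iff_ball.mp hne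
  obtain ⟨ρ₂, hρ₂, hρ₂sub⟩ : ∃ ρ₂ > 0, ball w₀ ρ₂ ⊆ {w : ℂ | w.im < 0} :=
    Metric.mem_nhds_iff.mp (lhpOpen.mem_nhds hw₀im)
  obtain ⟨rr, δ, hrr0, hrsub, hδ0, hinj, hsurj⟩ := loc_inv hsD hw₀d (lt_min hρ₁ hρ₂)
  rw [hw₀z] at hsurj
  set F : Set ℂ := {w : ℂ | w.im ≤ 0} \ ball w₀ rr with hFdef
  have hFc : IsClosed F := clhpClosed.sdiff isOpen_ball
  have hFs : F ⊆ {w : ℂ | w.im ≤ 0} := diff_subset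
  have hclosed := closed_image hε hM hz hb hFc hFs
  have hvF : v₀ ∉ z '' F := by
    rintro ⟨w', ⟨hw'le, hw'nb⟩, hw'eq⟩
    rcases lt_or_eq_of_le (show w'.im ≤ 0 from hw'le) with hlt | heq
    · exact hw'nb (huniq w' hlt hw'eq ▸ mem_ball_self hrr0)
    · exact hc ⟨w', heq, hw'eq⟩
  have hball : ∀ w ∈ ball w₀ rr, w.im < 0 ∧ deriv z w ≠ 0 := by
    intro w hw
    have := hrsub hw
    exact ⟨hρ₂sub (ball_subset_ball (min_le_right _ _) this),
      hρ₁sub w (ball_subset_ball (min_le_left _ _) this)⟩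
  filter_upwards [hclosed.isOpen_compl.mem_nhds hvF,
    (curve_closed hε hM hz hb).isOpen_compl.mem_nhds hc,
    ball_mem_nhds v₀ hδ0] with v hvF' hvc hvball
  refine ⟨hvc, ?_⟩
  obtain ⟨w, hwb, hwz⟩ := hsurj v hvball
  refine ⟨w, (hball w hwb).1, hwz, (hball w hwb).2, ?_⟩
  intro w' hw'im hw'z
  have hw'nF : w' ∉ F := fun hmem => hvF' ⟨w', hmem, hw'z⟩
  have hw'b : w' ∈ ball w₀ rr := by
    by_contra hcon
    exact hw'nF ⟨le_of_lt hw'im, hcon⟩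
  exact hinj w' hw'b w hwb (hw'z.trans hwz.symm)

lemma Vopen (hε : 0 < ε) (hM : 0 < M)
    (hz : DifferentiableOn ℂ z {w : ℂ | w.im < ε})
    (hb : ∀ w : ℂ, w.im < ε → ‖z w - w‖ ≤ M)
    {v₀ : ℂ} (hc : v₀ ∉ z '' {w : ℂ | w.im = 0}) (hnP : ¬ P z v₀) :
    ∀ᶠ v in 𝓝 v₀, v ∉ z '' {w : ℂ | w.im = 0} ∧ ¬ P z v := by
  have hcc := (curve_closed hε hM hz hb).isOpen_compl.mem_nhds hc
  by_cases hex : ∃ w, w.im < 0 ∧ z w = v₀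
  · by_cases hcrit : ∃ w, w.im < 0 ∧ z w = v₀ ∧ deriv z w = 0
    · obtain ⟨w₀, h1, h2, h3⟩ := hcrit
      have hdb := dbl hε hM hz hb h1 h3
      rw [h2] at hdb
      filter_upwards [hdb, hcc] with v hv hvc
      refine ⟨hvc, ?_⟩
      rintro ⟨w, hwim, hwz, hwd, huq⟩
      rcases hv with rfl | ⟨w₁, w₂, hnee, hi1, hi2, hz1, hz2⟩
      · exact hwd ((huq w₀ h1 h2) ▸ h3)
      · exact hnee ((huq w₁ hi1 hz1).trans (huq w₂ hi2 hz2).symm)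
    · by_cases htwo : ∃ w₁ w₂, w₁ ≠ w₂ ∧ w₁.im < 0 ∧ w₂.im < 0 ∧ z w₁ = v₀ ∧ z w₂ = v₀
      · obtain ⟨w₁, w₂, hnee, hi1, hi2, hzz1, hzz2⟩ := htwo
        have hdpos : (0:ℝ) < dist w₁ w₂ := dist_pos.mpr hnee
        set t₁ : ℝ := min (dist w₁ w₂ / 2) (-w₁.im) with ht₁def
        set t₂ : ℝ := min (dist w₁ w₂ / 2) (-w₂.im) with ht₂def
        have ht₁ : 0 < t₁ := lt_min (by linarith) (by linarith)
        have ht₂ : 0 < t₂ := lt_min (by linarith) (by linarith)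
        have E₁ : z '' ball w₁ t₁ ∈ 𝓝 v₀ := by
          have hle := nhds_le hε hM hz hb (hi1.trans hε)
          rw [hzz1] at hle
          exact hle (image_mem_map (ball_mem_nhds w₁ ht₁))
        have E₂ : z '' ball w₂ t₂ ∈ 𝓝 v₀ := by
          have hle := nhds_le hε hM hz hb (hi2.trans hε)
          rw [hzz2] at hle
          exact hle (image_mem_map (ball_mem_nhds w₂ ht₂))
        filter_upwards [E₁, E₂, hcc] with v hv1 hv2 hvc
        refine ⟨hvc, ?_⟩
        rintro ⟨w, hwim, hwz, hwd, huq⟩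
        obtain ⟨u₁, hu₁b, hu₁z⟩ := hv1
        obtain ⟨u₂, hu₂b, hu₂z⟩ := hv2
        have him1 : u₁.im < 0 := im_lt_of_ball hu₁b (min_le_right _ _)
        have him2 : u₂.im < 0 := im_lt_of_ball hu₂b (min_le_right _ _)
        have hune : u₁ ≠ u₂ := by
          intro hcon
          have hd1 : dist u₁ w₁ < dist w₁ w₂ / 2 :=
            lt_of_lt_of_le (mem_ball.mp hu₁b) (min_le_left _ _)
          have hd2 : dist u₂ w₂ < dist w₁ w₂ / 2 :=
            lt_of_lt_of_le (mem_ball.mp hu₂b) (min_le_left _ _)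
          have : dist w₁ w₂ ≤ dist w₁ u₁ + dist u₁ w₂ := dist_triangle _ _ _
          have h4 : dist u₁ w₂ = dist u₂ w₂ := by rw [hcon]
          rw [dist_comm w₁ u₁] at this
          linarith
        exact hune ((huq u₁ him1 hu₁z).trans (huq u₂ him2 hu₂z).symm)
      · exfalso
        apply hnP
        push_neg at hcrit htwo
        obtain ⟨w₀, hi, hzv⟩ := hex
        refine ⟨w₀, hi, hzv, hcrit w₀ hi hzv, ?_⟩
        intro w' hi' hz'
        by_contra hne
        exact htwo w' w₀ hne hi' hi hz' hzv
  · have hnoim : v₀ ∉ z '' {w : ℂ | w.im ≤ 0} := by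
      rintro ⟨w, hw, hweq⟩
      rcases lt_or_eq_of_le (show w.im ≤ 0 from hw) with hlt | heq
      · exact hex ⟨w, hlt, hweq⟩
      · exact hc ⟨w, heq, hweq⟩
    filter_upwards [(closed_image hε hM hz hb clhpClosed subset_rfl).isOpen_compl.mem_nhds hnoim,
      hcc] with v hv hvc
    exact ⟨hvc, fun ⟨w, hwim, hwz, _, _⟩ => hv ⟨w, le_of_lt hwim, hwz⟩⟩

end Main

end Stmt10

open Stmt10

/-- For `z` holomorphic on `{Im w < ε}` with `|z(w) − w| ≤ M` and `ζ = z|_ℝ`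
injective: for `z₀` off the curve, the equation `z(w) = z₀` has exactly one
solution in the open lower half-plane if `z₀` lies in the region below the
curve (the component of the complement containing points with `Im < −M`), and
no solutions if `z₀` lies in the region above the curve. -/
theorem stmt10 (ε M : ℝ) (hε : 0 < ε) (hM : 0 < M) (z : ℂ → ℂ)
    (hz : DifferentiableOn ℂ z {w : ℂ | w.im < ε})
    (hb : ∀ w : ℂ, w.im < ε → ‖z w - w‖ ≤ M)
    (hinj : Function.Injective fun α : ℝ => z (α : ℂ))
    (z₀ : ℂ) (hz₀ : z₀ ∉ z '' {w : ℂ | w.im = 0}) :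
    (z₀ ∈ connectedComponentIn (z '' {w : ℂ | w.im = 0})ᶜ (-(M + 1) * Complex.I) →
      ∃! w : ℂ, w.im < 0 ∧ z w = z₀) ∧
    (z₀ ∈ connectedComponentIn (z '' {w : ℂ | w.im = 0})ᶜ ((M + 1) * Complex.I) →
      ∀ w : ℂ, w.im < 0 → z w ≠ z₀) := by
  classical
  set curve := z '' {w : ℂ | w.im = 0} with hcurve
  constructor
  · intro hB
    set B := connectedComponentIn curveᶜ (-(M + 1) * Complex.I) with hBdef
    have hBsub : B ⊆ curveᶜ := connectedComponentIn_subset _ _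
    have hBpre : IsPreconnected B := isPreconnected_connectedComponentIn
    -- a deep point with the unique simple solution property
    set w₀ : ℂ := (-(4 * M + 2) : ℝ) * Complex.I with hw₀def
    have hw₀im : w₀.im = -(4 * M + 2) := by simp [hw₀def]
    have hw₀ε : w₀.im < ε := by rw [hw₀im]; linarith
    set v₁ : ℂ := z w₀ with hv₁def
    have hv₁im : v₁.im ≤ -(3 * M + 2) := by
      have h1 : (z w₀ - w₀).im ≤ M := (Stmt10.im_le_norm _).trans (hb w₀ hw₀ε)
      have h2 : (z w₀ - w₀).im = v₁.im - w₀.im := by rw [hv₁def, Complex.sub_im]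
      rw [hw₀im] at h2
      linarith [h2 ▸ h1]
    have hsubB : {v : ℂ | v.im < -M} ⊆ B := by
      apply (convex_halfSpace_im_lt (-M)).isPreconnected.subset_connectedComponentIn
      · show ((-(M + 1) : ℂ) * Complex.I).im < -M
        have him : ((-(M + 1) : ℂ) * Complex.I).im = -(M + 1) := by simp
        rw [him]
        linarith
      · intro v hv
        rw [mem_compl_iff]
        intro hvc
        have := (curve_im hε hM hb hvc).1
        rw [mem_setOf_eq] at hv
        linarith
    have hv₁B : v₁ ∈ B := hsubB (by rw [mem_setOf_eq]; linarith)
    have hPv₁ : P z v₁ := by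
      refine ⟨w₀, by rw [hw₀im]; linarith, rfl, ?_, ?_⟩
      · have hg := gderiv hε hM hz hb (show w₀.im ≤ -(2 * M) by rw [hw₀im]; linarith)
        intro hcon
        rw [hcon] at hg
        rw [zero_sub, norm_neg, norm_one] at hg
        linarith
      · intro w' hw'im hw'z
        exact deep_unique hε hM hz hb (show v₁.im ≤ -(3 * M + 1) by linarith)
          (hw'im.trans hε) hw₀ε hw'z rfl
    have hPz₀ : P z z₀ := by
      by_contra hnP
      set U : Set ℂ := {v | v ∉ curve ∧ P z v} with hU
      set V : Set ℂ := {v | v ∉ curve ∧ ¬ P z v} with hV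
      have hUo : IsOpen U := by
        rw [isOpen_iff_mem_nhds]
        intro v hv
        exact Filter.eventually_iff.mp (Uopen hε hM hz hb hv.1 hv.2)
      have hVo : IsOpen V := by
        rw [isOpen_iff_mem_nhds]
        intro v hv
        exact Filter.eventually_iff.mp (Vopen hε hM hz hb hv.1 hv.2)
      have hcover : B ⊆ U ∪ V := by
        intro v hv
        by_cases hpv : P z v
        · exact Or.inl ⟨hBsub hv, hpv⟩
        · exact Or.inr ⟨hBsub hv, hpv⟩
      have hUne : (B ∩ U).Nonempty := ⟨v₁, hv₁B, hBsub hv₁B, hPv₁⟩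
      have hVne : (B ∩ V).Nonempty := ⟨z₀, hB, hBsub hB, hnP⟩
      obtain ⟨x, hxB, hxU, hxV⟩ := hBpre U V hUo hVo hcover hUne hVne
      exact hxV.2 hxU.2
    obtain ⟨w, hw1, hw2, _, hw4⟩ := hPz₀
    exact ⟨w, ⟨hw1, hw2⟩, fun w' hw' => hw4 w' hw'.1 hw'.2⟩
  · intro hA w hw heq
    set A := connectedComponentIn curveᶜ ((M + 1) * Complex.I) with hAdef
    have hApre : IsPreconnected A := isPreconnected_connectedComponentIn
    set X : Set ℂ := z '' {u : ℂ | u.im < 0} with hX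
    set Y : Set ℂ := (z '' {u : ℂ | u.im ≤ 0})ᶜ with hY
    have hXo : IsOpen X := by
      rw [isOpen_iff_mem_nhds]
      rintro v ⟨u, hu, rfl⟩
      have hle := nhds_le hε hM hz hb ((show u.im < 0 from hu).trans hε)
      exact hle (image_mem_map (lhpOpen.mem_nhds hu))
    have hYo : IsOpen Y := (closed_image hε hM hz hb clhpClosed subset_rfl).isOpen_compl
    have himage : ∀ u : ℂ, u.im ≤ 0 → (z u).im ≤ M := by
      intro u hu
      have huε : u.im < ε := lt_of_le_of_lt hu hε
      have h1 : (z u - u).im ≤ M := (Stmt10.im_le_norm _).trans (hb u huε)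
      have h2 : (z u - u).im = (z u).im - u.im := Complex.sub_im _ _
      linarith [h2 ▸ h1]
    have hcover : A ⊆ X ∪ Y := by
      intro v hv
      by_cases hvim : v ∈ z '' {u : ℂ | u.im ≤ 0}
      · obtain ⟨u, hu, rfl⟩ := hvim
        rcases lt_or_eq_of_le (show u.im ≤ 0 from hu) with hlt | heq0
        · exact Or.inl ⟨u, hlt, rfl⟩
        · exact absurd (connectedComponentIn_subset _ _ hv) (by
            rw [mem_compl_iff, not_not]
            exact ⟨u, heq0, rfl⟩)
      · exact Or.inr hvim
    have htop : ((M + 1 : ℝ) : ℂ).re = M + 1 := by simp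
    have htopim : (((M : ℂ) + 1) * Complex.I).im = M + 1 := by simp
    have htopc : ((M : ℂ) + 1) * Complex.I ∈ curveᶜ := by
      rw [mem_compl_iff]
      intro hcon
      have := (curve_im hε hM hb hcon).2
      rw [htopim] at this
      linarith
    have hXne : (A ∩ X).Nonempty := ⟨z₀, hA, w, hw, heq⟩
    have hYne : (A ∩ Y).Nonempty := by
      refine ⟨((M : ℂ) + 1) * Complex.I, mem_connectedComponentIn htopc, ?_⟩
      intro hcon
      obtain ⟨u, hu, huz⟩ := hcon
      have h5 := himage u hu
      rw [huz, htopim] at h5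
      linarith
    obtain ⟨x, hxA, hxX, hxY⟩ := hApre X Y hXo hYo hcover hXne hYne
    exact hxY (image_mono (f := z) (fun u (hu : u.im < 0) => le_of_lt hu) hxX)
end

section
/- Let K ∈ Mat_{d×2}(ℝ) have rows that are linearly dependent over ℤ, i.e., there exists a nonzero m ∈ ℤ^d with m^T K = 0. Then there exists a unimodular integer matrix J ∈ GL_d(ℤ) such that the last row of JK is zero. Consequently, if u(x) = Σ_{j∈ℤ^d} û_j e^{i j^T K x} with absolutely summable coefficients, there exist L ∈ Mat_{(d−1)×2}(ℝ) and absolutely summable coefficients v̂_l such that u(x) = Σ_{l∈ℤ^{d−1}} v̂_l e^{i l^T L x} for all x ∈ ℝ². -/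
open Module Submodule

lemma aux_exists_unimodular (d : ℕ) (K : Matrix (Fin (d + 1)) (Fin 2) ℝ)
    (m : Fin (d + 1) → ℤ) (hm : m ≠ 0)
    (hdep : ∀ c : Fin 2, ∑ i, (m i : ℝ) * K i c = 0) :
    ∃ J : Matrix (Fin (d + 1)) (Fin (d + 1)) ℤ, IsUnit J.det ∧
      ∀ c : Fin 2, ∑ i, (J (Fin.last d) i : ℝ) * K i c = 0 := by
  classical
  -- the ℤ-linear map x ↦ xᵀK
  set T : (Fin (d + 1) → ℤ) →ₗ[ℤ] (Fin 2 → ℝ) :=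
    { toFun := fun x c => ∑ i, (x i : ℝ) * K i c
      map_add' := by intro x y; funext c; push_cast; simp [add_mul, Finset.sum_add_distrib]
      map_smul' := by
        intro n x; funext c
        simp only [Pi.smul_apply, smul_eq_mul, RingHom.id_apply, zsmul_eq_mul]
        push_cast
        rw [Finset.mul_sum]
        congr 1; funext i; ring } with hT
  set S : Submodule ℤ (Fin (d + 1) → ℤ) := LinearMap.ker T with hS
  have hmS : m ∈ S := by
    simp only [hS, LinearMap.mem_ker, hT, LinearMap.coe_mk, AddHom.coe_mk]
    funext c; exact hdep c
  -- the quotient is finite, torsion-free, hence free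
  haveI : NoZeroSMulDivisors ℤ ((Fin (d + 1) → ℤ) ⧸ S) := by
    constructor
    intro n q h
    rcases eq_or_ne n 0 with h0 | h0
    · exact Or.inl h0
    · right
      obtain ⟨x, rfl⟩ := S.mkQ_surjective q
      rw [← map_smul, Submodule.mkQ_apply, Submodule.Quotient.mk_eq_zero] at h
      rw [Submodule.mkQ_apply, Submodule.Quotient.mk_eq_zero]
      have hx : (n : ℤ) • T x = 0 := by rw [← map_smul]; exact h
      rcases smul_eq_zero.mp hx with h' | h'
      · exact absurd h' h0
      · exact h'
  haveI : Module.Finite ℤ ((Fin (d + 1) → ℤ) ⧸ S) := inferInstance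
  haveI : Module.Free ℤ ((Fin (d + 1) → ℤ) ⧸ S) := inferInstance
  -- a section of the quotient map
  obtain ⟨σ, hσ⟩ := Module.projective_lifting_property S.mkQ
    (LinearMap.id : ((Fin (d + 1) → ℤ) ⧸ S) →ₗ[ℤ] _) S.mkQ_surjective
  have hσid : ∀ q, S.mkQ (σ q) = q := fun q => congrFun (congrArg DFunLike.coe hσ) q
  set p : Submodule ℤ (Fin (d + 1) → ℤ) := LinearMap.range σ with hp
  have hcompl : IsCompl p S := by
    have hker : LinearMap.ker (LinearMap.codRestrict p (σ ∘ₗ S.mkQ)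
        (fun x => LinearMap.mem_range_self _ _)) = S := by
      ext x
      simp only [LinearMap.mem_ker, LinearMap.codRestrict, hS, LinearMap.mem_ker]
      constructor
      · intro hx
        have : σ (S.mkQ x) = 0 := congrArg Subtype.val hx
        have h2 : S.mkQ x = 0 := by
          have := congrArg S.mkQ this
          rwa [hσid, map_zero] at this
        rw [Submodule.mkQ_apply, Submodule.Quotient.mk_eq_zero] at h2
        exact h2
      · intro hx
        apply Subtype.ext
        show σ (S.mkQ x) = 0
        have : S.mkQ x = 0 := by rwa [Submodule.mkQ_apply, Submodule.Quotient.mk_eq_zero]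
        rw [this, map_zero]
    rw [← hker]
    apply LinearMap.isCompl_of_proj
    rintro ⟨x, y, rfl⟩
    apply Subtype.ext
    show σ (S.mkQ (σ y)) = σ y
    rw [hσid]
  -- bases
  haveI : Module.Finite ℤ S := Module.Finite.iff_fg.mpr (IsNoetherian.noetherian S)
  haveI : Module.Finite ℤ p := Module.Finite.iff_fg.mpr (IsNoetherian.noetherian p)
  set t := finrank ℤ p with ht
  set s := finrank ℤ S with hs
  have hnS : Nontrivial S := ⟨⟨m, hmS⟩, 0, by simp [Subtype.ext_iff, hm]⟩
  have hspos : 0 < s := hs ▸ Module.finrank_pos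
  have hts : t + s = d + 1 := by
    have h1 := (Submodule.prodEquivOfIsCompl p S hcompl).finrank_eq
    rw [Module.finrank_prod] at h1
    rw [ht, hs, h1, Module.finrank_pi]
    simp
  set b0 : Basis (Fin t ⊕ Fin s) ℤ (Fin (d + 1) → ℤ) :=
    ((Module.finBasis ℤ p).prod (Module.finBasis ℤ S)).map
      (Submodule.prodEquivOfIsCompl p S hcompl) with hb0
  have hb0S : ∀ j, b0 (Sum.inr j) ∈ S := by
    intro j
    rw [hb0]
    simp only [Basis.map_apply]
    rw [Submodule.coe_prodEquivOfIsCompl']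
    rw [Basis.prod_apply_inr_fst, Basis.prod_apply_inr_snd]
    simpa using Submodule.coe_mem _
  set e : (Fin t ⊕ Fin s) ≃ Fin (d + 1) := finSumFinEquiv.trans (finCongr hts) with he
  set b := b0.reindex e with hb
  have hlast : b (Fin.last d) ∈ S := by
    have : e.symm (Fin.last d) = Sum.inr ⟨s - 1, by omega⟩ := by
      apply e.injective
      rw [Equiv.apply_symm_apply]
      rw [he]
      simp only [Equiv.trans_apply, finSumFinEquiv_apply_right, finCongr_apply]
      ext
      simp [Fin.natAdd]
      omega
    rw [hb, Basis.reindex_apply, this]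
    exact hb0S _
  refine ⟨Matrix.of (fun i j => b i j), ?_, ?_⟩
  · have h1 : (Pi.basisFun ℤ (Fin (d + 1))).toMatrix ⇑b * b.toMatrix ⇑(Pi.basisFun ℤ (Fin (d + 1))) = 1 :=
      Basis.toMatrix_mul_toMatrix_flip _ _
    have h2 : IsUnit ((Pi.basisFun ℤ (Fin (d + 1))).toMatrix ⇑b).det := by
      apply IsUnit.of_mul_eq_one (b.toMatrix ⇑(Pi.basisFun ℤ (Fin (d + 1)))).det
      rw [← Matrix.det_mul, h1, Matrix.det_one]
    have h3 : Matrix.of (fun i j => b i j) = ((Pi.basisFun ℤ (Fin (d + 1))).toMatrix ⇑b).transpose := by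
      ext i j
      simp [Basis.toMatrix_apply, Pi.basisFun_repr]
    rw [h3, Matrix.det_transpose]
    exact h2
  · intro c
    have : T (b (Fin.last d)) = 0 := hlast
    have hc := congrFun this c
    simpa [hT] using hc

/-- If the rows of `K ∈ Mat_{(d+1)×2}(ℝ)` are linearly dependent over `ℤ`,
there is a unimodular integer matrix `J` with the last row of `JK` zero;
consequently any quasi-periodic sum `u(x) = Σ_j û_j e^{i j^T K x}` with
absolutely summable coefficients can be rewritten with `d` quasi-periods:
`u(x) = Σ_l v̂_l e^{i l^T L x}` for some `L ∈ Mat_{d×2}(ℝ)` and absolutely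
summable `v̂`. -/
theorem stmt17 (d : ℕ) (K : Matrix (Fin (d + 1)) (Fin 2) ℝ)
    (m : Fin (d + 1) → ℤ) (hm : m ≠ 0)
    (hdep : ∀ c : Fin 2, ∑ i, (m i : ℝ) * K i c = 0)
    (uhat : (Fin (d + 1) → ℤ) → ℂ)
    (hsum : Summable fun j : Fin (d + 1) → ℤ => ‖uhat j‖)
    (u : (Fin 2 → ℝ) → ℂ)
    (hu : ∀ x : Fin 2 → ℝ, u x = ∑' j : Fin (d + 1) → ℤ,
      uhat j * Complex.exp (Complex.I *
        ((∑ c, (∑ i, (j i : ℝ) * K i c) * x c : ℝ) : ℂ))) :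
    (∃ J : Matrix (Fin (d + 1)) (Fin (d + 1)) ℤ, IsUnit J.det ∧
      ∀ c : Fin 2, ((J.map (fun n : ℤ => (n : ℝ))) * K) (Fin.last d) c = 0) ∧
    (∃ L : Matrix (Fin d) (Fin 2) ℝ, ∃ vhat : (Fin d → ℤ) → ℂ,
      (Summable fun l : Fin d → ℤ => ‖vhat l‖) ∧
      ∀ x : Fin 2 → ℝ, u x = ∑' l : Fin d → ℤ,
        vhat l * Complex.exp (Complex.I *
          ((∑ c, (∑ i, (l i : ℝ) * L i c) * x c : ℝ) : ℂ))) := by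
  classical
  obtain ⟨J, hJdet, hJrow⟩ := aux_exists_unimodular d K m hm hdep
  have hJrow' : ∀ c : Fin 2, ((J.map (fun n : ℤ => (n : ℝ))) * K) (Fin.last d) c = 0 := by
    intro c
    rw [Matrix.mul_apply]
    simpa [Matrix.map_apply] using hJrow c
  refine ⟨⟨J, hJdet, hJrow'⟩, ?_⟩
  haveI : Invertible J := J.invertibleOfIsUnitDet hJdet
  -- the reindexing bijection on ℤ^(d+1)
  set φ : (Fin (d + 1) → ℤ) ≃ (Fin (d + 1) → ℤ) :=
    { toFun := fun k => Matrix.vecMul k J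
      invFun := fun k => Matrix.vecMul k (⅟J)
      left_inv := by
        intro k
        show Matrix.vecMul (Matrix.vecMul k J) (⅟J) = k
        rw [Matrix.vecMul_vecMul, mul_invOf_self, Matrix.vecMul_one]
      right_inv := by
        intro k
        show Matrix.vecMul (Matrix.vecMul k (⅟J)) J = k
        rw [Matrix.vecMul_vecMul, invOf_mul_self, Matrix.vecMul_one] } with hφ
  set L : Matrix (Fin d) (Fin 2) ℝ :=
    Matrix.of (fun p c => ((J.map (fun n : ℤ => (n : ℝ))) * K) p.castSucc c) with hL
  -- key exponent identity
  have key : ∀ (k : Fin (d + 1) → ℤ) (c : Fin 2),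
      ∑ i, ((φ k) i : ℝ) * K i c = ∑ p : Fin d, ((k p.castSucc : ℝ)) * L p c := by
    intro k c
    have h1 : ∀ i, ((φ k) i : ℝ) = ∑ q, (k q : ℝ) * (J q i : ℝ) := by
      intro i
      simp only [hφ, Equiv.coe_fn_mk, Matrix.vecMul, dotProduct]
      push_cast
      rfl
    calc ∑ i, ((φ k) i : ℝ) * K i c
        = ∑ i, (∑ q, (k q : ℝ) * (J q i : ℝ)) * K i c := by
          refine Finset.sum_congr rfl fun i _ => by rw [h1]
      _ = ∑ q, (k q : ℝ) * ∑ i, (J q i : ℝ) * K i c := by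
          simp_rw [Finset.sum_mul, Finset.mul_sum]
          rw [Finset.sum_comm]
          refine Finset.sum_congr rfl fun q _ => Finset.sum_congr rfl fun i _ => by ring
      _ = ∑ q, (k q : ℝ) * ((J.map (fun n : ℤ => (n : ℝ))) * K) q c := by
          refine Finset.sum_congr rfl fun q _ => by rw [Matrix.mul_apply]; rfl
      _ = ∑ p : Fin d, ((k p.castSucc : ℝ)) * L p c := by
          rw [Fin.sum_univ_castSucc]
          simp [hJrow' c, hL]
  -- reindexing ℤ^(d+1) as (ℤ^d) × ℤ
  set ε : ((Fin d → ℤ) × ℤ) ≃ (Fin (d + 1) → ℤ) :=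
    (Equiv.prodComm _ _).trans (Fin.snocEquiv (fun _ => ℤ)) with hε
  have hεapp : ∀ (p : (Fin d → ℤ) × ℤ), ε p = Fin.snoc p.1 p.2 := by
    intro p; funext i; rfl
  set ψ : ((Fin d → ℤ) × ℤ) ≃ (Fin (d + 1) → ℤ) := ε.trans φ with hψ
  have hWsum : Summable (fun p : (Fin d → ℤ) × ℤ => ‖uhat (ψ p)‖) :=
    (Equiv.summable_iff ψ).mpr hsum
  have h1 : ∀ l, Summable (fun n : ℤ => ‖uhat (ψ (l, n))‖) := fun l => hWsum.prod_factor l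
  set vhat : (Fin d → ℤ) → ℂ := fun l => ∑' n : ℤ, uhat (ψ (l, n)) with hvhat
  have hg : Summable (fun l : Fin d → ℤ => ∑' n : ℤ, ‖uhat (ψ (l, n))‖) :=
    (hWsum.hasSum.prod_fiberwise (fun l => (h1 l).hasSum)).summable
  have hvs : Summable (fun l : Fin d → ℤ => ‖vhat l‖) :=
    Summable.of_nonneg_of_le (fun l => norm_nonneg _)
      (fun l => norm_tsum_le_tsum_norm (h1 l)) hg
  refine ⟨L, vhat, hvs, ?_⟩
  intro x
  set E : (Fin d → ℤ) → ℂ := fun l => Complex.exp (Complex.I *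
    ((∑ c, (∑ p, (l p : ℝ) * L p c) * x c : ℝ) : ℂ)) with hE
  have hEnorm : ∀ l, ‖E l‖ = 1 := by
    intro l
    rw [hE]
    simp [Complex.norm_exp]
  have hsnoc : ∀ (p : (Fin d → ℤ) × ℤ) (i : Fin d), (ε p) i.castSucc = p.1 i := by
    intro p i
    rw [hεapp]
    exact Fin.snoc_castSucc _ _ _
  calc u x = ∑' j : Fin (d + 1) → ℤ,
        uhat j * Complex.exp (Complex.I *
          ((∑ c, (∑ i, (j i : ℝ) * K i c) * x c : ℝ) : ℂ)) := hu x
    _ = ∑' k : Fin (d + 1) → ℤ,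
        uhat (φ k) * Complex.exp (Complex.I *
          ((∑ c, (∑ i, ((φ k) i : ℝ) * K i c) * x c : ℝ) : ℂ)) :=
      (φ.tsum_eq _).symm
    _ = ∑' k : Fin (d + 1) → ℤ, uhat (φ k) * E (fun p => k p.castSucc) := by
      refine tsum_congr fun k => ?_
      have hsum_eq : (∑ c, (∑ i, ((φ k) i : ℝ) * K i c) * x c)
          = ∑ c, (∑ p : Fin d, ((k p.castSucc : ℝ)) * L p c) * x c :=
        Finset.sum_congr rfl fun c _ => by rw [key k c]
      simp only [hE]
      rw [hsum_eq]
    _ = ∑' p : (Fin d → ℤ) × ℤ, uhat (ψ p) * E p.1 := by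
      rw [← (ε.tsum_eq (fun k => uhat (φ k) * E (fun p => k p.castSucc)))]
      refine tsum_congr fun p => ?_
      have : (fun q : Fin d => (ε p) q.castSucc) = p.1 := funext fun i => hsnoc p i
      rw [this]
      rfl
    _ = ∑' l : Fin d → ℤ, ∑' n : ℤ, uhat (ψ (l, n)) * E l := by
      apply Summable.tsum_prod'
      · apply Summable.of_norm
        apply hWsum.congr
        intro p
        rw [norm_mul, hEnorm, mul_one]
      · intro l
        exact ((h1 l).of_norm).mul_right (E l)
    _ = ∑' l : Fin d → ℤ, vhat l * E l := by
      refine tsum_congr fun l => ?_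
      rw [hvhat, tsum_mul_right]
    _ = ∑' l : Fin d → ℤ, vhat l * Complex.exp (Complex.I *
          ((∑ c, (∑ i, (l i : ℝ) * L i c) * x c : ℝ) : ℂ)) := rfl
end
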